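/- If F has a free (0,1)-curve (an essential simple closed vertical curve γ on 𝕋² with F(γ) ∩ γ = ∅), then for any lift f of F there exists k ∈ ℤ such that pr₁(rot(f)) ⊂ [k, k+1]. -/

import Mathlib

open Filter Topology

/-- A line in `ℝ²`: a proper topological embedding of `ℝ`. -/
def IsLine (ℓ : ℝ → ℝ × ℝ) : Prop := Function.Injective ℓ ∧ IsProperMap ℓ

/-- A `(p,q)`-line: a line invariant under translation by `(p,q)` (after a time shift
`τ > 0`) whose projection to the torus is a simple closed curve. -/
def IsPQLine (p q : ℤ) (ℓ : ℝ → ℝ × ℝ) : Prop :=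
  IsLine ℓ ∧ ∃ τ > (0 : ℝ),
    (∀ t, ℓ (t + τ) = ℓ t + ((p : ℝ), (q : ℝ))) ∧
    ∀ s t : ℝ, ∀ m₁ m₂ : ℤ, ℓ t = ℓ s + ((m₁ : ℝ), (m₂ : ℝ)) → ∃ k : ℤ, t = s + k * τ

/-- `L` is the left side of the `(p,q)`-line `ℓ`: the connected component of the
complement of `ℓ` reached by going far in the direction `(−q, p)`. -/
def IsLeftSide (p q : ℤ) (ℓ : ℝ → ℝ × ℝ) (L : Set (ℝ × ℝ)) : Prop :=
  (∃ z ∉ Set.range ℓ, L = connectedComponentIn (Set.range ℓ)ᶜ z) ∧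
  ∀ᶠ t : ℝ in atTop, ℓ 0 + t • ((-q : ℝ), (p : ℝ)) ∈ L

/-- `R` is the right side of the `(p,q)`-line `ℓ`. -/
def IsRightSide (p q : ℤ) (ℓ : ℝ → ℝ × ℝ) (R : Set (ℝ × ℝ)) : Prop :=
  (∃ z ∉ Set.range ℓ, R = connectedComponentIn (Set.range ℓ)ᶜ z) ∧
  ∀ᶠ t : ℝ in atTop, ℓ 0 + t • ((q : ℝ), (-p : ℝ)) ∈ R

/-- `ℓ₁ < ℓ₂`: `ℓ₁` lies in the left component of the complement of `ℓ₂` and `ℓ₂` in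
the right component of the complement of `ℓ₁`. -/
def lineLT (p q : ℤ) (ℓ₁ ℓ₂ : ℝ → ℝ × ℝ) : Prop :=
  (∃ L, IsLeftSide p q ℓ₂ L ∧ Set.range ℓ₁ ⊆ L) ∧
  (∃ R, IsRightSide p q ℓ₁ R ∧ Set.range ℓ₂ ⊆ R)

/-- `ℓ₁ ≤ ℓ₂`: `ℓ₁` is contained in the closed left side of `ℓ₂`. -/
def lineLE (p q : ℤ) (ℓ₁ ℓ₂ : ℝ → ℝ × ℝ) : Prop :=
  ∃ L, IsLeftSide p q ℓ₂ L ∧ Set.range ℓ₁ ⊆ L ∪ Set.range ℓ₂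

/-- A homeomorphism of the plane is orientation preserving iff it is isotopic to the
identity through homeomorphisms. -/
def OrientationPreserving (f : ℝ × ℝ → ℝ × ℝ) : Prop :=
  ∃ H : ℝ → ℝ × ℝ → ℝ × ℝ,
    Continuous (fun z : ℝ × (ℝ × ℝ) => H z.1 z.2) ∧
    (∀ s, ∃ g : (ℝ × ℝ) ≃ₜ (ℝ × ℝ), ⇑g = H s) ∧ H 0 = id ∧ H 1 = f

def T1 (p : ℝ × ℝ) : ℝ × ℝ := (p.1 + 1, p.2)

def T2 (p : ℝ × ℝ) : ℝ × ℝ := (p.1, p.2 + 1)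

/-- The Misiurewicz–Ziemian rotation set. -/
def rotSet (f : ℝ × ℝ → ℝ × ℝ) : Set (ℝ × ℝ) :=
  {v | ∃ n : ℕ → ℕ, ∃ x : ℕ → ℝ × ℝ,
    Tendsto n atTop atTop ∧
    Tendsto (fun i => ((n i : ℝ))⁻¹ • (f^[n i] (x i) - x i)) atTop (𝓝 v)}

namespace RotFreeAux

open Complex Real Set Filter Topology

noncomputable section




-- quadrant lemmas
lemma argQ1 {w : ℂ} (h1 : 0 < w.re) (h2 : 0 < w.im) : 0 < arg w ∧ arg w < π / 2 := by
  have hlt : |arg w| < π / 2 := Complex.abs_arg_lt_pi_div_two_iff.mpr (Or.inl h1)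
  have h0 : 0 ≤ arg w := Complex.arg_nonneg_iff.mpr h2.le
  have hne : arg w ≠ 0 := by
    intro h
    rcases Complex.arg_eq_zero_iff.mp h with ⟨_, him⟩
    exact h2.ne' him
  exact ⟨lt_of_le_of_ne h0 (Ne.symm hne), (abs_lt.mp hlt).2⟩

lemma argQ2 {w : ℂ} (h1 : w.re < 0) (h2 : 0 < w.im) : π / 2 < arg w ∧ arg w < π := by
  have hw : w ≠ 0 := by intro h; rw [h] at h1; simp at h1
  have hge : ¬ |arg w| < π / 2 := by
    rw [Complex.abs_arg_lt_pi_div_two_iff]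
    push_neg
    exact ⟨by linarith, hw⟩
  have h0 : 0 ≤ arg w := Complex.arg_nonneg_iff.mpr h2.le
  have habs : |arg w| = arg w := abs_of_nonneg h0
  have hge' : π / 2 ≤ arg w := by rw [habs] at hge; linarith [not_lt.mp hge]
  have hne : arg w ≠ π / 2 := by
    intro h
    rcases Complex.arg_eq_pi_div_two_iff.mp h with ⟨hre, _⟩
    exact h1.ne hre
  have hlt : arg w < π := by
    refine lt_of_le_of_ne (Complex.arg_le_pi w) ?_
    intro h
    rcases Complex.arg_eq_pi_iff.mp h with ⟨_, him⟩
    exact h2.ne' him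
  exact ⟨lt_of_le_of_ne hge' (Ne.symm hne), hlt⟩

lemma argQ4 {w : ℂ} (h1 : 0 < w.re) (h2 : w.im < 0) : -(π / 2) < arg w ∧ arg w < 0 := by
  have hlt : |arg w| < π / 2 := Complex.abs_arg_lt_pi_div_two_iff.mpr (Or.inl h1)
  have h0 : arg w < 0 := Complex.arg_neg_iff.mpr h2
  exact ⟨(abs_lt.mp hlt).1, h0⟩

lemma argQ3 {w : ℂ} (h1 : w.re < 0) (h2 : w.im < 0) : -π < arg w ∧ arg w < -(π / 2) := by
  have hw : w ≠ 0 := by intro h; rw [h] at h1; simp at h1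
  have hge : ¬ |arg w| < π / 2 := by
    rw [Complex.abs_arg_lt_pi_div_two_iff]
    push_neg
    exact ⟨by linarith, hw⟩
  have h0 : arg w < 0 := Complex.arg_neg_iff.mpr h2
  have habs : |arg w| = -arg w := abs_of_neg h0
  have hge' : arg w ≤ -(π / 2) := by rw [habs] at hge; linarith [not_lt.mp hge]
  have hne : arg w ≠ -(π / 2) := by
    intro h
    rcases Complex.arg_eq_neg_pi_div_two_iff.mp h with ⟨hre, _⟩
    exact h1.ne hre
  exact ⟨Complex.neg_pi_lt_arg w, lt_of_le_of_ne hge' hne⟩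

lemma real_eq_of_angle_eq {x y : ℝ} (h : (x : Real.Angle) = (y : Real.Angle))
    (hb : |x - y| < 2 * π) : x = y := by
  rcases Real.Angle.angle_eq_iff_two_pi_dvd_sub.mp h with ⟨k, hk⟩
  have hπ := Real.pi_pos
  have : |(k : ℝ)| < 1 := by
    rw [hk] at hb
    have : 2 * π * |(k : ℝ)| < 2 * π * 1 := by
      calc 2 * π * |(k : ℝ)| = |2 * π * k| := by
            rw [abs_mul]; rw [abs_of_pos (by linarith : (0:ℝ) < 2 * π)]
        _ < 2 * π := hb
        _ = 2 * π * 1 := by ring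
    exact lt_of_mul_lt_mul_left this (by linarith)
  have hk0 : k = 0 := by
    rwa [← Int.cast_abs, show (1:ℝ) = ((1:ℤ):ℝ) by norm_num, Int.cast_lt,
      Int.abs_lt_one_iff] at this
  rw [hk0] at hk; push_cast at hk; linarith





def bU (w : ℂ) : ℝ := arg (w * (-I)) + π/2
def bL (w : ℂ) : ℝ := arg (-w) + π
def bD (w : ℂ) : ℝ := arg (w * I) - π/2

lemma bU_angle {w : ℂ} (hw : w ≠ 0) : ((bU w : ℝ) : Real.Angle) = (arg w : ℝ) := by
  have h := Complex.arg_mul_coe_angle hw (show (-I : ℂ) ≠ 0 by simp)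
  rw [Complex.arg_neg_I] at h
  unfold bU
  rw [Real.Angle.coe_add, h, Real.Angle.coe_neg]
  abel

lemma bL_angle {w : ℂ} (hw : w ≠ 0) : ((bL w : ℝ) : Real.Angle) = (arg w : ℝ) := by
  have h : (arg (-w) : Real.Angle) = (arg w : ℝ) + (arg (-1 : ℂ) : ℝ) := by
    rw [← Complex.arg_mul_coe_angle hw (show (-1 : ℂ) ≠ 0 by simp)]
    ring_nf
  rw [Complex.arg_neg_one] at h
  unfold bL
  rw [Real.Angle.coe_add, h]
  have : ((π : ℝ) : Real.Angle) + (π : ℝ) = 0 := by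
    rw [← Real.Angle.coe_add, ← two_mul, Real.Angle.coe_two_pi]
  calc (arg w : Real.Angle) + (π:ℝ) + (π:ℝ) = (arg w : Real.Angle) + (((π:ℝ):Real.Angle) + (π:ℝ)) := by abel
    _ = (arg w : ℝ) := by rw [this, add_zero]

lemma bD_angle {w : ℂ} (hw : w ≠ 0) : ((bD w : ℝ) : Real.Angle) = (arg w : ℝ) := by
  have h := Complex.arg_mul_coe_angle hw Complex.I_ne_zero
  rw [Complex.arg_I] at h
  unfold bD
  rw [Real.Angle.coe_sub, h]
  abel

lemma branch_step {w w' : ℂ} (hw : w ≠ 0) (hw' : w' ≠ 0) {x x' : ℝ}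
    (hx : (x : Real.Angle) = (arg w : ℝ)) (hx' : (x' : Real.Angle) = (arg w' : ℝ))
    (hxb : |x' - x| < 3 * π / 2)
    (hsmall : |arg (w' / w)| < π / 2) :
    arg (w' / w) = x' - x := by
  have h1 : ((arg (w' / w) : ℝ) : Real.Angle) = ((x' - x : ℝ) : Real.Angle) := by
    rw [Complex.arg_div_coe_angle hw' hw, Real.Angle.coe_sub, hx, hx']
  refine real_eq_of_angle_eq h1 ?_
  have hπ := Real.pi_pos
  calc |arg (w' / w) - (x' - x)| ≤ |arg (w' / w)| + |x' - x| := abs_sub _ _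
    _ < π / 2 + 3 * π / 2 := by exact add_lt_add hsmall hxb
    _ = 2 * π := by ring


-- branch range lemmas
lemma bU_mem {w : ℂ} (h : 0 < w.im) : 0 < bU w ∧ bU w < π := by
  have h1 : 0 < (w * (-I)).re := by simp [Complex.mul_re]; linarith
  have h2 : |arg (w * (-I))| < π / 2 := Complex.abs_arg_lt_pi_div_two_iff.mpr (Or.inl h1)
  have := abs_lt.mp h2
  constructor <;> unfold bU <;> linarith [this.1, this.2]

lemma bD_mem {w : ℂ} (h : w.im < 0) : -π < bD w ∧ bD w < 0 := by
  have h1 : 0 < (w * I).re := by simp [Complex.mul_re]; linarith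
  have h2 : |arg (w * I)| < π / 2 := Complex.abs_arg_lt_pi_div_two_iff.mpr (Or.inl h1)
  have := abs_lt.mp h2
  constructor <;> unfold bD <;> linarith [this.1, this.2]

lemma bL_mem {w : ℂ} (h : w.re < 0) : π/2 < bL w ∧ bL w < 3*π/2 := by
  have h1 : 0 < (-w).re := by simp; linarith
  have h2 : |arg (-w)| < π / 2 := Complex.abs_arg_lt_pi_div_two_iff.mpr (Or.inl h1)
  have := abs_lt.mp h2
  constructor <;> unfold bL <;> linarith [this.1, this.2]

lemma arg_mem {w : ℂ} (h : 0 < w.re) : -(π/2) < arg w ∧ arg w < π/2 := by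
  have h2 : |arg w| < π / 2 := Complex.abs_arg_lt_pi_div_two_iff.mpr (Or.inl h)
  have := abs_lt.mp h2
  exact ⟨this.1, this.2⟩

-- corner lemmas
lemma bU_corner2 {w : ℂ} (h1 : w.re < 0) (h2 : 0 < w.im) : π/2 < bU w ∧ bU w < π := by
  have hq := argQ1 (w := w * (-I)) (by simp [Complex.mul_re]; linarith) (by simp [Complex.mul_im]; linarith)
  constructor <;> unfold bU <;> linarith [hq.1, hq.2]

lemma bU_corner1 {w : ℂ} (h1 : 0 < w.re) (h2 : 0 < w.im) : 0 < bU w ∧ bU w < π/2 := by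
  have hq := argQ4 (w := w * (-I)) (by simp [Complex.mul_re]; linarith) (by simp [Complex.mul_im]; linarith)
  constructor <;> unfold bU <;> linarith [hq.1, hq.2]

lemma bD_corner4 {w : ℂ} (h1 : 0 < w.re) (h2 : w.im < 0) : -(π/2) < bD w ∧ bD w < 0 := by
  have hq := argQ1 (w := w * I) (by simp [Complex.mul_re]; linarith) (by simp [Complex.mul_im]; linarith)
  constructor <;> unfold bD <;> linarith [hq.1, hq.2]

lemma bD_corner3 {w : ℂ} (h1 : w.re < 0) (h2 : w.im < 0) : -π < bD w ∧ bD w < -(π/2) := by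
  have hq := argQ4 (w := w * I) (by simp [Complex.mul_re]; linarith) (by simp [Complex.mul_im]; linarith)
  constructor <;> unfold bD <;> linarith [hq.1, hq.2]

lemma bL_corner3 {w : ℂ} (h1 : w.re < 0) (h2 : w.im < 0) : π < bL w ∧ bL w < 3*π/2 := by
  have hq := argQ1 (w := -w) (by simp; linarith) (by simp; linarith)
  constructor <;> unfold bL <;> linarith [hq.1, hq.2]

lemma bL_corner2 {w : ℂ} (h1 : w.re < 0) (h2 : 0 < w.im) : π/2 < bL w ∧ bL w < π := by
  have hq := argQ4 (w := -w) (by simp; linarith) (by simp; linarith)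
  constructor <;> unfold bL <;> linarith [hq.1, hq.2]


set_option maxHeartbeats 1000000 in
lemma no_crossing {ℓ γ : ℝ → ℝ × ℝ} (hℓ : Continuous ℓ) (hγ : Continuous γ)
    {τ a b : ℝ} (hτ : 0 < τ) (hper : ∀ t, ℓ (t + τ) = ℓ t + (0, 1))
    (ha : ∀ t, a ≤ (ℓ t).1) (hb : ∀ t, (ℓ t).1 ≤ b)
    (hLe : (γ 0).1 < a) (hRe : b < (γ 1).1)
    (hdisj : ∀ s ∈ Icc (0:ℝ) 1, γ s ∉ range ℓ) : False := by
  have hπ := Real.pi_pos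
  -- periodicity in ℕ and ℤ
  have hperN : ∀ (m : ℕ) (t : ℝ), ℓ (t + (m:ℝ) * τ) = ℓ t + (0, (m : ℝ)) := by
    intro m
    induction m with
    | zero => intro t; simp
    | succ m ih =>
        intro t
        have h1 : t + ((m+1:ℕ):ℝ) * τ = (t + (m:ℝ) * τ) + τ := by push_cast; ring
        rw [h1, hper, ih t, add_assoc]
        have h2 : ((0:ℝ),(m:ℝ)) + ((0:ℝ),(1:ℝ)) = ((0:ℝ), ((m+1:ℕ):ℝ)) := by
          rw [Prod.mk_add_mk]
          exact Prod.ext (by norm_num) (by push_cast; ring)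
        rw [h2]
  have hper2 : ∀ (k : ℤ) (t : ℝ), ℓ (t + (k:ℝ) * τ) = ℓ t + (0, (k : ℝ)) := by
    intro k t
    rcases le_or_gt 0 k with hk | hk
    · have : ((k.toNat : ℕ) : ℝ) = (k : ℝ) := by exact_mod_cast Int.toNat_of_nonneg hk
      rw [← this, hperN]
    · set m : ℕ := (-k).toNat with hm
      have hmk : ((m : ℕ) : ℝ) = -(k:ℝ) := by
        rw [hm]; exact_mod_cast Int.toNat_of_nonneg (by omega : (0:ℤ) ≤ -k)
      have := hperN m (t + (k:ℝ) * τ)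
      rw [hmk] at this
      have h2 : t + (k:ℝ) * τ + -(k:ℝ) * τ = t := by ring
      rw [h2] at this
      have h3 : ℓ (t + (k:ℝ)*τ) = ℓ t - (0, -(k:ℝ)) := by rw [this]; abel
      rw [h3, sub_eq_add_neg, Prod.neg_mk, neg_zero, neg_neg]
  -- bound on γ's second coordinate
  have hIne : (Icc (0:ℝ) 1).Nonempty := Set.nonempty_Icc.mpr (by norm_num)
  obtain ⟨s₀, hs₀Q, hmax'⟩ := isCompact_Icc.exists_isMaxOn (f := fun s => |(γ s).2|)
    hIne ((continuous_abs.comp hγ.snd).continuousOn)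
  have hmax := isMaxOn_iff.mp hmax'
  set M := |(γ s₀).2| with hM
  have hM0 : 0 ≤ M := abs_nonneg _
  have hγ2 : ∀ s ∈ Icc (0:ℝ) 1, -M ≤ (γ s).2 ∧ (γ s).2 ≤ M := by
    intro s hs
    have h := hmax s hs
    exact ⟨by linarith [neg_abs_le ((γ s).2)], by linarith [le_abs_self ((γ s).2)]⟩
  obtain ⟨k₁, hk₁⟩ := exists_int_lt (-M - 1 - (ℓ 0).2)
  obtain ⟨k₂, hk₂⟩ := exists_int_gt (M + 1 - (ℓ 0).2)
  set t₁ := (k₁ : ℝ) * τ with ht₁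
  set t₂ := (k₂ : ℝ) * τ with ht₂
  have hℓt₁ : (ℓ t₁).2 < -M - 1 := by
    have h := hper2 k₁ 0
    rw [zero_add] at h
    rw [ht₁, h, Prod.snd_add]
    have : ((0:ℝ), (k₁:ℝ)).2 = (k₁:ℝ) := rfl
    rw [this]
    linarith
  have hℓt₂ : M + 1 < (ℓ t₂).2 := by
    have h := hper2 k₂ 0
    rw [zero_add] at h
    rw [ht₂, h, Prod.snd_add]
    have : ((0:ℝ), (k₂:ℝ)).2 = (k₂:ℝ) := rfl
    rw [this]
    linarith
  -- the map F
  set lt' : ℝ → ℝ := fun u => t₁ + u * (t₂ - t₁) with hlt'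
  have hlt0 : lt' 0 = t₁ := by simp [hlt']
  have hlt1 : lt' 1 = t₂ := by simp [hlt']
  set F : ℝ × ℝ → ℂ := fun p =>
    (((γ p.1).1 - (ℓ (lt' p.2)).1 : ℝ) : ℂ) + (((γ p.1).2 - (ℓ (lt' p.2)).2 : ℝ) : ℂ) * I with hF
  have hltc : Continuous lt' := by fun_prop
  have hFc : Continuous F := by
    apply Continuous.add
    · exact Complex.continuous_ofReal.comp (((hγ.comp continuous_fst).fst).sub
        ((hℓ.comp (hltc.comp continuous_snd)).fst))
    · exact (Complex.continuous_ofReal.comp (((hγ.comp continuous_fst).snd).sub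
        ((hℓ.comp (hltc.comp continuous_snd)).snd))).mul continuous_const
  have hFre : ∀ p, (F p).re = (γ p.1).1 - (ℓ (lt' p.2)).1 := by
    intro p; rw [hF]; simp
  have hFim : ∀ p, (F p).im = (γ p.1).2 - (ℓ (lt' p.2)).2 := by
    intro p; rw [hF]; simp
  set Q : Set (ℝ × ℝ) := Icc (0:ℝ) 1 ×ˢ Icc (0:ℝ) 1 with hQ
  have hQc : IsCompact Q := isCompact_Icc.prod isCompact_Icc
  have hQne : ((0:ℝ), (0:ℝ)) ∈ Q := by constructor <;> constructor <;> norm_num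
  have hF0 : ∀ p ∈ Q, F p ≠ 0 := by
    rintro p hp h0
    apply hdisj p.1 hp.1
    refine ⟨lt' p.2, ?_⟩
    have h1 : (F p).re = 0 := by rw [h0]; simp
    have h2 : (F p).im = 0 := by rw [h0]; simp
    rw [hFre] at h1; rw [hFim] at h2
    exact (Prod.ext (by linarith) (by linarith)).symm
  obtain ⟨p₀, hp₀Q, hp₀'⟩ := hQc.exists_isMinOn (f := fun p => ‖F p‖)
    ⟨_, hQne⟩ ((continuous_norm.comp hFc).continuousOn)
  have hp₀ := isMinOn_iff.mp hp₀'
  set ε := ‖F p₀‖ with hε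
  have hεpos : 0 < ε := by
    rw [hε]
    exact norm_pos_iff.mpr (hF0 _ hp₀Q)
  have hUC := hQc.uniformContinuousOn_of_continuous hFc.continuousOn
  rw [Metric.uniformContinuousOn_iff] at hUC
  obtain ⟨δ, hδpos, hδ⟩ := hUC ε hεpos
  obtain ⟨N₀, hN₀⟩ := exists_nat_one_div_lt hδpos
  set n := N₀ + 1 with hn
  have hnp : 0 < n := Nat.succ_pos _
  have hnR : (0:ℝ) < (n:ℝ) := by exact_mod_cast hnp
  have hinv : 1 / (n:ℝ) < δ := by
    rw [hn]; push_cast; exact hN₀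
  set P : ℕ → ℕ → ℝ × ℝ := fun i j => ((i:ℝ)/(n:ℝ), (j:ℝ)/(n:ℝ)) with hP
  have hdm : ∀ i : ℕ, i ≤ n → (i:ℝ)/(n:ℝ) ∈ Icc (0:ℝ) 1 := by
    intro i hi
    constructor
    · positivity
    · rw [div_le_one hnR]; exact_mod_cast hi
  have hPQ : ∀ i j, i ≤ n → j ≤ n → P i j ∈ Q := by
    intro i j hi hj
    exact ⟨hdm i hi, hdm j hj⟩
  set z : ℕ → ℕ → ℂ := fun i j => F (P i j) with hz
  have hzne : ∀ i j, i ≤ n → j ≤ n → z i j ≠ 0 := fun i j hi hj => hF0 _ (hPQ i j hi hj)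
  -- small arg between close points
  have hsmall : ∀ p q, p ∈ Q → q ∈ Q → dist p q < δ →
      |arg (F q / F p)| < π/2 := by
    intro p q hp hq hpq
    have hfp : F p ≠ 0 := hF0 p hp
    have hd : dist (F p) (F q) < ε := hδ p hp q hq hpq
    have hd' : ‖F p - F q‖ < ε := by rwa [Complex.dist_eq] at hd
    have hge : ε ≤ ‖F p‖ := hp₀ p hp
    have h1 : ‖1 - F q / F p‖ < 1 := by
      have he : 1 - F q / F p = (F p - F q) / F p := by field_simp
      rw [he, norm_div, div_lt_one (norm_pos_iff.mpr hfp)]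
      exact lt_of_lt_of_le hd' hge
    have h2 : 0 < (F q / F p).re := by
      have hre : (1 - F q / F p).re ≤ ‖1 - F q / F p‖ := Complex.re_le_norm _
      have he2 : (1 - F q / F p).re = 1 - (F q / F p).re := by simp
      linarith [he2 ▸ hre, h1]
    exact Complex.abs_arg_lt_pi_div_two_iff.mpr (Or.inl h2)
  have hdd : ∀ i : ℕ, dist ((i:ℝ)/(n:ℝ)) (((i+1:ℕ):ℝ)/(n:ℝ)) = 1/(n:ℝ) := by
    intro i
    have he : ((i+1:ℕ):ℝ)/(n:ℝ) - (i:ℝ)/(n:ℝ) = 1/(n:ℝ) := by push_cast; ring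
    rw [Real.dist_eq, abs_sub_comm, he, abs_of_pos (by positivity)]
  have hadjH : ∀ i j, i < n → j ≤ n → |arg (z (i+1) j / z i j)| < π/2 := by
    intro i j hi hj
    apply hsmall _ _ (hPQ i j hi.le hj) (hPQ (i+1) j hi hj)
    rw [Prod.dist_eq]
    simp only [hP]
    rw [hdd i]
    simp only [dist_self]
    rw [max_eq_left (by positivity)]
    exact hinv
  have hadjV : ∀ i j, i ≤ n → j < n → |arg (z i (j+1) / z i j)| < π/2 := by
    intro i j hi hj
    apply hsmall _ _ (hPQ i j hi hj.le) (hPQ i (j+1) hi hj)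
    rw [Prod.dist_eq]
    simp only [hP]
    rw [hdd j]
    simp only [dist_self]
    rw [max_eq_right (by positivity)]
    exact hinv
  -- edge coordinate signs
  have hzre : ∀ i j, (z i j).re = (γ ((i:ℝ)/(n:ℝ))).1 - (ℓ (lt' ((j:ℝ)/(n:ℝ)))).1 := by
    intro i j; rw [hz]; exact hFre (P i j)
  have hzim : ∀ i j, (z i j).im = (γ ((i:ℝ)/(n:ℝ))).2 - (ℓ (lt' ((j:ℝ)/(n:ℝ)))).2 := by
    intro i j; rw [hz]; exact hFim (P i j)
  have hc0 : ((0:ℕ):ℝ)/(n:ℝ) = 0 := by simp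
  have hc1 : ((n:ℕ):ℝ)/(n:ℝ) = 1 := div_self hnR.ne'
  have hBot : ∀ i, i ≤ n → 0 < (z i 0).im := by
    intro i hi
    rw [hzim, hc0, hlt0]
    linarith [(hγ2 _ (hdm i hi)).1, hℓt₁]
  have hTop : ∀ i, i ≤ n → (z i n).im < 0 := by
    intro i hi
    rw [hzim, hc1, hlt1]
    linarith [(hγ2 _ (hdm i hi)).2, hℓt₂]
  have hLft : ∀ j, j ≤ n → (z 0 j).re < 0 := by
    intro j hj
    rw [hzre, hc0]
    linarith [ha (lt' ((j:ℝ)/(n:ℝ)))]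
  have hRgt : ∀ j, j ≤ n → 0 < (z n j).re := by
    intro j hj
    rw [hzre, hc1]
    linarith [hb (lt' ((j:ℝ)/(n:ℝ)))]
  -- increments
  set dH : ℕ → ℕ → ℝ := fun i j => arg (z (i+1) j / z i j) with hdH
  set dV : ℕ → ℕ → ℝ := fun i j => arg (z i (j+1) / z i j) with hdV
  have hsq : ∀ i j, i < n → j < n → dH i j + dV (i+1) j = dV i j + dH i (j+1) := by
    intro i j hi hj
    have hz00 := hzne i j hi.le hj.le
    have hz10 := hzne (i+1) j hi hj.le
    have hz01 := hzne i (j+1) hi.le hj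
    have hz11 := hzne (i+1) (j+1) hi hj
    have hLa : ((dH i j + dV (i+1) j : ℝ) : Real.Angle)
        = ((arg (z (i+1) (j+1)) : ℝ) : Real.Angle) - ((arg (z i j) : ℝ) : Real.Angle) := by
      rw [Real.Angle.coe_add]
      simp only [hdH, hdV]
      rw [Complex.arg_div_coe_angle hz10 hz00, Complex.arg_div_coe_angle hz11 hz10]
      abel
    have hRa : ((dV i j + dH i (j+1) : ℝ) : Real.Angle)
        = ((arg (z (i+1) (j+1)) : ℝ) : Real.Angle) - ((arg (z i j) : ℝ) : Real.Angle) := by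
      rw [Real.Angle.coe_add]
      simp only [hdH, hdV]
      rw [Complex.arg_div_coe_angle hz01 hz00, Complex.arg_div_coe_angle hz11 hz01]
      abel
    refine real_eq_of_angle_eq (hLa.trans hRa.symm) ?_
    have b1 := abs_lt.mp (hadjH i j hi hj.le)
    have b2 := abs_lt.mp (hadjV (i+1) j hi hj)
    have b3 := abs_lt.mp (hadjV i j hi.le hj)
    have b4 := abs_lt.mp (hadjH i (j+1) hi hj)
    rw [abs_lt]
    simp only [hdH, hdV]
    constructor <;> linarith [b1.1, b1.2, b2.1, b2.2, b3.1, b3.2, b4.1, b4.2]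
  set A : ℕ → ℝ := fun j => ∑ i ∈ Finset.range n, dH i j with hA
  have hrow : ∀ j, j < n → A (j+1) - A j = dV n j - dV 0 j := by
    intro j hj
    have h1 : A (j+1) - A j = ∑ i ∈ Finset.range n, (dH i (j+1) - dH i j) := by
      rw [hA, ← Finset.sum_sub_distrib]
    rw [h1]
    have h2 : ∀ i ∈ Finset.range n, dH i (j+1) - dH i j = dV (i+1) j - dV i j := by
      intro i hi
      have := hsq i j (Finset.mem_range.mp hi) hj
      linarith
    rw [Finset.sum_congr rfl h2, Finset.sum_range_sub (f := fun i => dV i j)]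
  have hGreen : A n - A 0
      = (∑ j ∈ Finset.range n, dV n j) - (∑ j ∈ Finset.range n, dV 0 j) := by
    have h1 : A n - A 0 = ∑ j ∈ Finset.range n, (A (j+1) - A j) :=
      (Finset.sum_range_sub A n).symm
    rw [h1, Finset.sum_congr rfl (fun j hj => hrow j (Finset.mem_range.mp hj)),
      Finset.sum_sub_distrib]
  -- edge evaluations
  have hA0 : A 0 = bU (z n 0) - bU (z 0 0) := by
    have hstep : ∀ i ∈ Finset.range n, dH i 0 = bU (z (i+1) 0) - bU (z i 0) := by
      intro i hi
      have hi' := Finset.mem_range.mp hi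
      have m1 := bU_mem (hBot i hi'.le)
      have m2 := bU_mem (hBot (i+1) hi')
      refine branch_step (hzne i 0 hi'.le (Nat.zero_le n)) (hzne (i+1) 0 hi' (Nat.zero_le n))
        (bU_angle (hzne i 0 hi'.le (Nat.zero_le n))) (bU_angle (hzne (i+1) 0 hi' (Nat.zero_le n)))
        ?_ (hadjH i 0 hi' (Nat.zero_le n))
      rw [abs_lt]; constructor <;> linarith [m1.1, m1.2, m2.1, m2.2]
    rw [hA]
    simp only []
    rw [Finset.sum_congr rfl hstep, Finset.sum_range_sub (f := fun i => bU (z i 0))]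
  have hAn : A n = bD (z n n) - bD (z 0 n) := by
    have hstep : ∀ i ∈ Finset.range n, dH i n = bD (z (i+1) n) - bD (z i n) := by
      intro i hi
      have hi' := Finset.mem_range.mp hi
      have m1 := bD_mem (hTop i hi'.le)
      have m2 := bD_mem (hTop (i+1) hi')
      refine branch_step (hzne i n hi'.le le_rfl) (hzne (i+1) n hi' le_rfl)
        (bD_angle (hzne i n hi'.le le_rfl)) (bD_angle (hzne (i+1) n hi' le_rfl))
        ?_ (hadjH i n hi' le_rfl)
      rw [abs_lt]; constructor <;> linarith [m1.1, m1.2, m2.1, m2.2]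
    rw [hA]
    simp only []
    rw [Finset.sum_congr rfl hstep, Finset.sum_range_sub (f := fun i => bD (z i n))]
  have hLsum : (∑ j ∈ Finset.range n, dV 0 j) = bL (z 0 n) - bL (z 0 0) := by
    have hstep : ∀ j ∈ Finset.range n, dV 0 j = bL (z 0 (j+1)) - bL (z 0 j) := by
      intro j hj
      have hj' := Finset.mem_range.mp hj
      have m1 := bL_mem (hLft j hj'.le)
      have m2 := bL_mem (hLft (j+1) hj')
      refine branch_step (hzne 0 j (Nat.zero_le n) hj'.le) (hzne 0 (j+1) (Nat.zero_le n) hj')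
        (bL_angle (hzne 0 j (Nat.zero_le n) hj'.le)) (bL_angle (hzne 0 (j+1) (Nat.zero_le n) hj'))
        ?_ (hadjV 0 j (Nat.zero_le n) hj')
      rw [abs_lt]; constructor <;> linarith [m1.1, m1.2, m2.1, m2.2]
    rw [Finset.sum_congr rfl hstep, Finset.sum_range_sub (f := fun j => bL (z 0 j))]
  have hRsum : (∑ j ∈ Finset.range n, dV n j) = arg (z n n) - arg (z n 0) := by
    have hstep : ∀ j ∈ Finset.range n, dV n j = arg (z n (j+1)) - arg (z n j) := by
      intro j hj
      have hj' := Finset.mem_range.mp hj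
      have m1 := arg_mem (hRgt j hj'.le)
      have m2 := arg_mem (hRgt (j+1) hj')
      refine branch_step (hzne n j le_rfl hj'.le) (hzne n (j+1) le_rfl hj')
        rfl rfl ?_ (hadjV n j le_rfl hj')
      rw [abs_lt]; constructor <;> linarith [m1.1, m1.2, m2.1, m2.2]
    rw [Finset.sum_congr rfl hstep, Finset.sum_range_sub (f := fun j => arg (z n j))]
  -- corner bounds
  have cbU00 := bU_corner2 (hLft 0 (Nat.zero_le n)) (hBot 0 (Nat.zero_le n))
  have cbUn0 := bU_corner1 (hRgt 0 (Nat.zero_le n)) (hBot n le_rfl)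
  have cargn0 := argQ1 (hRgt 0 (Nat.zero_le n)) (hBot n le_rfl)
  have cargnn := argQ4 (hRgt n le_rfl) (hTop n le_rfl)
  have cbDnn := bD_corner4 (hRgt n le_rfl) (hTop n le_rfl)
  have cbD0n := bD_corner3 (hLft n le_rfl) (hTop 0 (Nat.zero_le n))
  have cbL0n := bL_corner3 (hLft n le_rfl) (hTop 0 (Nat.zero_le n))
  have cbL00 := bL_corner2 (hLft 0 (Nat.zero_le n)) (hBot 0 (Nat.zero_le n))
  rw [hA0, hAn, hLsum, hRsum] at hGreen
  linarith [cbU00.1, cbU00.2, cbUn0.1, cbUn0.2, cargn0.1, cargn0.2, cargnn.1, cargnn.2,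
    cbDnn.1, cbDnn.2, cbD0n.1, cbD0n.2, cbL0n.1, cbL0n.2, cbL00.1, cbL00.2]






lemma frontier_comp_subset {S : Set (ℝ×ℝ)} (hS : IsClosed S) (z : ℝ×ℝ) :
    frontier (connectedComponentIn Sᶜ z) ⊆ S := by
  intro x hx
  by_contra hxS
  have hxc : x ∈ Sᶜ := hxS
  have hopen : IsOpen (connectedComponentIn Sᶜ x) := hS.isOpen_compl.connectedComponentIn
  have hxm : x ∈ connectedComponentIn Sᶜ x := mem_connectedComponentIn hxc
  have hxcl : x ∈ closure (connectedComponentIn Sᶜ z) := hx.1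
  rcases mem_closure_iff.mp hxcl _ hopen hxm with ⟨y, hyD, hyC⟩
  have h1 : connectedComponentIn Sᶜ x = connectedComponentIn Sᶜ y := connectedComponentIn_eq hyD
  have h2 : connectedComponentIn Sᶜ z = connectedComponentIn Sᶜ y := connectedComponentIn_eq hyC
  have hmem : x ∈ connectedComponentIn Sᶜ z := by rw [h2, ← h1]; exact hxm
  have hopenz : IsOpen (connectedComponentIn Sᶜ z) := hS.isOpen_compl.connectedComponentIn
  rw [hopenz.frontier_eq] at hx
  exact hx.2 hmem

lemma pin {S V : Set (ℝ×ℝ)} (hS : IsClosed S) (hV : IsOpen V) (hVne : V.Nonempty)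
    (hVproper : V ≠ univ) (hVS : Disjoint V S) (hVc : IsPreconnected V)
    {w : ℝ×ℝ} (hw : w ∉ S) (hfr : frontier V ⊆ connectedComponentIn Sᶜ w) :
    V ⊆ connectedComponentIn Sᶜ w := by
  obtain ⟨x, hxfr⟩ := nonempty_frontier_iff.mpr ⟨hVne, hVproper⟩
  have hxD : x ∈ connectedComponentIn Sᶜ w := hfr hxfr
  have hDopen : IsOpen (connectedComponentIn Sᶜ w) := hS.isOpen_compl.connectedComponentIn
  have hxcl : x ∈ closure V := hxfr.1
  rcases mem_closure_iff.mp hxcl _ hDopen hxD with ⟨y, hyD, hyV⟩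
  have hVsub : V ⊆ Sᶜ := fun u hu hus => Set.disjoint_left.mp hVS hu hus
  have h1 : V ⊆ connectedComponentIn Sᶜ y :=
    hVc.subset_connectedComponentIn hyV hVsub
  rw [connectedComponentIn_eq hyD]
  exact h1

lemma left_ne_right {ℓ : ℝ → ℝ×ℝ} (hc : Continuous ℓ) (hS : IsClosed (range ℓ))
    {τ a b : ℝ} (hτ : 0 < τ) (hper : ∀ t, ℓ (t+τ) = ℓ t + (0,1))
    (ha : ∀ t, a ≤ (ℓ t).1) (hb : ∀ t, (ℓ t).1 ≤ b) :
    connectedComponentIn (range ℓ)ᶜ ((a-1, 0)) ≠ connectedComponentIn (range ℓ)ᶜ ((b+1, 0)) := by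
  intro heq
  have hzL : ((a-1,0) : ℝ×ℝ) ∈ (range ℓ)ᶜ := by
    rintro ⟨t, ht⟩
    have h1 : (ℓ t).1 = a - 1 := by rw [ht]
    linarith [ha t]
  have hzR : ((b+1,0) : ℝ×ℝ) ∈ (range ℓ)ᶜ := by
    rintro ⟨t, ht⟩
    have h1 : (ℓ t).1 = b + 1 := by rw [ht]
    linarith [hb t]
  set C := connectedComponentIn (range ℓ)ᶜ ((a-1,0) : ℝ×ℝ) with hC
  have hCopen : IsOpen C := hS.isOpen_compl.connectedComponentIn
  have hCconn : IsConnected C :=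
    ⟨⟨_, mem_connectedComponentIn hzL⟩, isPreconnected_connectedComponentIn⟩
  have hCpath : IsPathConnected C := (hCopen.isConnected_iff_isPathConnected).mp hCconn
  have hzRC : ((b+1,0):ℝ×ℝ) ∈ C := heq ▸ mem_connectedComponentIn hzR
  obtain ⟨p, hp⟩ := hCpath.joinedIn _ (mem_connectedComponentIn hzL) _ hzRC
  refine no_crossing hc p.continuous_extend hτ hper ha hb ?_ ?_ ?_
  · rw [p.extend_zero]; norm_num
  · rw [p.extend_one]; norm_num
  · intro s hs hmem
    have h1 : p.extend s ∈ C := by rw [Path.extend_apply p hs]; exact hp _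
    exact (connectedComponentIn_subset _ _ h1) hmem







lemma convex_lt (a : ℝ) : Convex ℝ {p : ℝ×ℝ | p.1 < a} :=
  convex_halfSpace_lt ⟨fun _ _ => rfl, fun _ _ => rfl⟩ a

lemma convex_gt (b : ℝ) : Convex ℝ {p : ℝ×ℝ | b < p.1} :=
  convex_halfSpace_gt ⟨fun _ _ => rfl, fun _ _ => rfl⟩ b

/-- shift by integer multiples of (1,0) commutes with g -/
lemma shift_comm {g : ℝ×ℝ → ℝ×ℝ} (hg1 : ∀ z : ℝ×ℝ, g (z + (1,0)) = g z + (1,0)) :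
    ∀ (c : ℤ) (z : ℝ×ℝ), g (z + ((c:ℝ),0)) = g z + ((c:ℝ),0) := by
  have hN : ∀ (m : ℕ) (z : ℝ×ℝ), g (z + ((m:ℝ),0)) = g z + ((m:ℝ),0) := by
    intro m
    induction m with
    | zero => intro z; simp [Prod.mk_zero_zero]
    | succ m ih =>
        intro z
        have h1 : z + (((m+1:ℕ):ℝ),0) = (z + ((m:ℝ),0)) + (1,0) := by
          refine Prod.ext ?_ ?_ <;> simp <;> push_cast <;> ring
        rw [h1, hg1, ih]
        refine Prod.ext ?_ ?_ <;> simp <;> push_cast <;> ring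
  intro c z
  rcases le_or_gt 0 c with hc | hc
  · have h : ((c.toNat : ℕ) : ℝ) = (c : ℝ) := by exact_mod_cast Int.toNat_of_nonneg hc
    rw [← h, hN]
  · set m : ℕ := (-c).toNat with hm
    have hmc : ((m : ℕ) : ℝ) = -(c:ℝ) := by
      rw [hm]; exact_mod_cast Int.toNat_of_nonneg (by omega : (0:ℤ) ≤ -c)
    have h := hN m (z + ((c:ℝ),0))
    rw [hmc] at h
    have h2 : z + ((c:ℝ),0) + (-(c:ℝ),0) = z := by
      refine Prod.ext ?_ ?_ <;> simp
    rw [h2] at h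
    have h3 : g (z + ((c:ℝ),0)) = g z - (-(c:ℝ),0) := by rw [h]; abel
    rw [h3]
    refine Prod.ext ?_ ?_ <;> simp

lemma dichotomy {S : Set (ℝ×ℝ)} (hS : IsClosed S) (hSc : IsPreconnected S)
    {z₀ : ℝ×ℝ} (hz₀ : z₀ ∈ S) {a b : ℝ}
    (hSa : ∀ w ∈ S, a ≤ w.1) (hSb : ∀ w ∈ S, w.1 ≤ b)
    (hsep : connectedComponentIn Sᶜ (((a-1:ℝ),(0:ℝ))) ≠ connectedComponentIn Sᶜ (((b+1:ℝ),(0:ℝ))))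
    (g : (ℝ×ℝ) ≃ₜ (ℝ×ℝ)) (hg1 : ∀ z : ℝ×ℝ, g (z + (1,0)) = g z + (1,0))
    (hdisj : ∀ w ∈ S, g w ∉ S) :
    (g '' (connectedComponentIn Sᶜ (((b+1:ℝ),(0:ℝ)))) ⊆ connectedComponentIn Sᶜ (((b+1:ℝ),(0:ℝ)))) ∨
    (g '' (connectedComponentIn Sᶜ (((a-1:ℝ),(0:ℝ)))) ⊆ connectedComponentIn Sᶜ (((a-1:ℝ),(0:ℝ)))) := by
  set zL : ℝ×ℝ := ((a-1:ℝ),(0:ℝ)) with hzLdef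
  set zR : ℝ×ℝ := ((b+1:ℝ),(0:ℝ)) with hzRdef
  have hzLS : zL ∉ S := fun h => by have := hSa zL h; rw [hzLdef] at this; simp at this; linarith
  have hzRS : zR ∉ S := fun h => by have := hSb zR h; rw [hzRdef] at this; simp at this; linarith
  set L := connectedComponentIn Sᶜ zL with hLdef
  set R := connectedComponentIn Sᶜ zR with hRdef
  set UL : Set (ℝ×ℝ) := {p | p.1 < a} with hULdef
  set UR : Set (ℝ×ℝ) := {p | b < p.1} with hURdef
  have hULS : UL ⊆ Sᶜ := fun p hp hps => by
    have := hSa p hps; rw [hULdef] at hp; exact absurd this (not_le.mpr hp)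
  have hURS : UR ⊆ Sᶜ := fun p hp hps => by
    have := hSb p hps; rw [hURdef] at hp; exact absurd this (not_le.mpr hp)
  have hzLUL : zL ∈ UL := by
    rw [hULdef, hzLdef]; simp only [Set.mem_setOf_eq]; norm_num
  have hzRUR : zR ∈ UR := by
    rw [hURdef, hzRdef]; simp only [Set.mem_setOf_eq]; norm_num
  have hULL : UL ⊆ L := (convex_lt a).isPreconnected.subset_connectedComponentIn hzLUL hULS
  have hURR : UR ⊆ R := (convex_gt b).isPreconnected.subset_connectedComponentIn hzRUR hURS
  -- any component other than L avoids UL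
  have hcapL : ∀ x, x ∉ S → connectedComponentIn Sᶜ x ≠ L →
      ∀ w ∈ connectedComponentIn Sᶜ x, a ≤ w.1 := by
    intro x hx hne w hw
    by_contra hlt
    have hwUL : w ∈ UL := by rw [hULdef]; exact not_le.mp hlt
    have h1 : connectedComponentIn Sᶜ x = connectedComponentIn Sᶜ w := connectedComponentIn_eq hw
    have h2 : L = connectedComponentIn Sᶜ w := connectedComponentIn_eq (hULL hwUL)
    exact hne (h1.trans h2.symm)
  have hcapR : ∀ x, x ∉ S → connectedComponentIn Sᶜ x ≠ R →
      ∀ w ∈ connectedComponentIn Sᶜ x, w.1 ≤ b := by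
    intro x hx hne w hw
    by_contra hlt
    have hwUR : w ∈ UR := by rw [hURdef]; exact not_le.mp hlt
    have h1 : connectedComponentIn Sᶜ x = connectedComponentIn Sᶜ w := connectedComponentIn_eq hw
    have h2 : R = connectedComponentIn Sᶜ w := connectedComponentIn_eq (hURR hwUR)
    exact hne (h1.trans h2.symm)
  have hgz₀ : g z₀ ∉ S := hdisj z₀ hz₀
  have hdisj' : ∀ w ∈ S, g.symm w ∉ S := by
    intro w hw h
    have := hdisj _ h
    rw [g.apply_symm_apply] at this
    exact this hw
  have hgsz₀ : g.symm z₀ ∉ S := hdisj' z₀ hz₀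
  set C1 := connectedComponentIn Sᶜ (g z₀) with hC1def
  set C2 := connectedComponentIn Sᶜ (g.symm z₀) with hC2def
  have hgS_C1 : g '' S ⊆ C1 := by
    refine (hSc.image _ g.continuous.continuousOn).subset_connectedComponentIn
      ⟨z₀, hz₀, rfl⟩ ?_
    rintro w ⟨u, hu, rfl⟩
    exact hdisj u hu
  have hgsS_C2 : g.symm '' S ⊆ C2 := by
    refine (hSc.image _ g.symm.continuous.continuousOn).subset_connectedComponentIn
      ⟨z₀, hz₀, rfl⟩ ?_
    rintro w ⟨u, hu, rfl⟩
    exact hdisj' u hu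
  -- key: if comp x ≠ C2 then g''(comp x) ⊆ C1
  have key : ∀ x, x ∉ S → connectedComponentIn Sᶜ x ≠ C2 →
      g '' (connectedComponentIn Sᶜ x) ⊆ C1 := by
    intro x hx hne
    set D := connectedComponentIn Sᶜ x with hDdef
    have hDo : IsOpen D := hS.isOpen_compl.connectedComponentIn
    have hVo : IsOpen (g '' D) := g.isOpenMap _ hDo
    have hVne : (g '' D).Nonempty := ⟨g x, x, mem_connectedComponentIn hx, rfl⟩
    have hDS : D ⊆ Sᶜ := connectedComponentIn_subset _ _
    have hVproper : g '' D ≠ univ := by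
      intro h
      have : g z₀ ∈ g '' D := h ▸ mem_univ _
      rcases this with ⟨u, huD, he⟩
      have : u = z₀ := g.injective he
      rw [this] at huD
      exact (hDS huD) hz₀
    have hVS : Disjoint (g '' D) S := by
      rw [Set.disjoint_left]
      rintro w ⟨u, huD, rfl⟩ hws
      have hu2 : u ∈ g.symm '' S := ⟨g u, hws, g.symm_apply_apply u⟩
      have h1 : D = connectedComponentIn Sᶜ u := connectedComponentIn_eq huD
      have h2 : C2 = connectedComponentIn Sᶜ u := connectedComponentIn_eq (hgsS_C2 hu2)
      exact hne (h1.trans h2.symm)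
    have hVc : IsPreconnected (g '' D) :=
      isPreconnected_connectedComponentIn.image _ g.continuous.continuousOn
    have hfr : frontier (g '' D) ⊆ C1 := by
      rw [← Homeomorph.image_frontier]
      refine subset_trans ?_ hgS_C1
      exact Set.image_mono (frontier_comp_subset hS x)
    exact pin hS hVo hVne hVproper hVS hVc hgz₀ hfr
  -- unboundedness
  have hshift := shift_comm (g := ⇑g) hg1
  have hsub : ∀ (m:ℕ) (z : ℝ×ℝ), g (z - ((m:ℝ),0)) = g z - ((m:ℝ),0) := by
    intro m z
    have h := hshift (-(m:ℤ)) z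
    push_cast at h
    have e1 : z + ((-(m:ℝ)), 0) = z - ((m:ℝ),0) := by
      refine Prod.ext ?_ ?_ <;> simp [Prod.fst_sub, Prod.snd_sub, sub_eq_add_neg]
    have e2 : g z + ((-(m:ℝ)), 0) = g z - ((m:ℝ),0) := by
      refine Prod.ext ?_ ?_ <;> simp [Prod.fst_sub, Prod.snd_sub, sub_eq_add_neg]
    rw [e1, e2] at h
    exact h
  have hadd : ∀ (m:ℕ) (z : ℝ×ℝ), g (z + ((m:ℝ),0)) = g z + ((m:ℝ),0) := by
    intro m z
    have h := hshift ((m:ℤ)) z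
    push_cast at h
    exact h
  have hunbL : ∀ c : ℝ, ∃ w ∈ L, (g w).1 < c := by
    intro c
    obtain ⟨m, hm⟩ := exists_nat_gt ((g zL).1 - c)
    have hm0 : (0:ℝ) ≤ (m:ℝ) := Nat.cast_nonneg m
    refine ⟨zL - ((m:ℝ), 0), ?_, ?_⟩
    · apply hULL
      have hw1 : (zL - ((m:ℝ),0)).1 = a - 1 - (m:ℝ) := by
        rw [hzLdef]; simp [Prod.fst_sub]
      rw [hULdef]
      simp only [Set.mem_setOf_eq]
      rw [hw1]
      linarith
    · rw [hsub m zL]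
      simp only [Prod.fst_sub]
      linarith
  have hunbR : ∀ c : ℝ, ∃ w ∈ R, c < (g w).1 := by
    intro c
    obtain ⟨m, hm⟩ := exists_nat_gt (c - (g zR).1)
    have hm0 : (0:ℝ) ≤ (m:ℝ) := Nat.cast_nonneg m
    refine ⟨zR + ((m:ℝ), 0), ?_, ?_⟩
    · apply hURR
      have hw1 : (zR + ((m:ℝ),0)).1 = b + 1 + (m:ℝ) := by
        rw [hzRdef]; simp [Prod.fst_add]
      rw [hURdef]
      simp only [Set.mem_setOf_eq]
      rw [hw1]
      linarith
    · rw [hadd m zR]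
      simp only [Prod.fst_add]
      linarith
  -- case analysis
  by_cases h2L : C2 = L
  · -- then C2 ≠ R so g R ⊆ C1; C1 must be R
    have h2R : connectedComponentIn Sᶜ zR ≠ C2 := by rw [h2L]; exact fun h => hsep (h.symm)
    have hgR : g '' R ⊆ C1 := key zR hzRS h2R
    by_cases h1R : C1 = R
    · left; rw [h1R] at hgR; exact hgR
    · exfalso
      obtain ⟨w, hwR, hwgt⟩ := hunbR b
      have : (g w).1 ≤ b := hcapR (g z₀) hgz₀ h1R _ (hgR ⟨w, hwR, rfl⟩)
      linarith
  · have hgL : g '' L ⊆ C1 := key zL hzLS (fun h => h2L h.symm)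
    by_cases h2R : C2 = R
    · by_cases h1L : C1 = L
      · right; rw [h1L] at hgL; exact hgL
      · exfalso
        obtain ⟨w, hwL, hwlt⟩ := hunbL a
        have : a ≤ (g w).1 := hcapL (g z₀) hgz₀ h1L _ (hgL ⟨w, hwL, rfl⟩)
        linarith
    · exfalso
      have hgR : g '' R ⊆ C1 := key zR hzRS (fun h => h2R h.symm)
      by_cases h1L : C1 = L
      · have h1R : C1 ≠ R := by rw [h1L]; exact hsep
        obtain ⟨w, hwR, hwgt⟩ := hunbR b
        have : (g w).1 ≤ b := hcapR (g z₀) hgz₀ h1R _ (hgR ⟨w, hwR, rfl⟩)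
        linarith
      · obtain ⟨w, hwL, hwlt⟩ := hunbL a
        have : a ≤ (g w).1 := hcapL (g z₀) hgz₀ h1L _ (hgL ⟨w, hwL, rfl⟩)
        linarith


section compbounds
variable {S : Set (ℝ×ℝ)} {a b : ℝ}

lemma comp_rub (hSb : ∀ w ∈ S, w.1 ≤ b) :
    ∀ p : ℝ×ℝ, b < p.1 → p ∈ connectedComponentIn Sᶜ (((b+1:ℝ),(0:ℝ))) := by
  intro p hp
  have hUR : {q : ℝ×ℝ | b < q.1} ⊆ Sᶜ := fun q hq hqs => absurd (hSb q hqs) (not_le.mpr hq)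
  have hzR : (((b+1:ℝ),(0:ℝ)) : ℝ×ℝ) ∈ {q : ℝ×ℝ | b < q.1} := by simp
  exact (convex_gt b).isPreconnected.subset_connectedComponentIn hzR hUR hp

lemma comp_llb (hSa : ∀ w ∈ S, a ≤ w.1) :
    ∀ p : ℝ×ℝ, p.1 < a → p ∈ connectedComponentIn Sᶜ (((a-1:ℝ),(0:ℝ))) := by
  intro p hp
  have hUL : {q : ℝ×ℝ | q.1 < a} ⊆ Sᶜ := fun q hq hqs => absurd (hSa q hqs) (not_le.mpr hq)
  have hzL : (((a-1:ℝ),(0:ℝ)) : ℝ×ℝ) ∈ {q : ℝ×ℝ | q.1 < a} := by simp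
  exact (convex_lt a).isPreconnected.subset_connectedComponentIn hzL hUL hp

lemma comp_lb (hSa : ∀ w ∈ S, a ≤ w.1)
    (hsep : connectedComponentIn Sᶜ (((a-1:ℝ),(0:ℝ))) ≠ connectedComponentIn Sᶜ (((b+1:ℝ),(0:ℝ)))) :
    ∀ w ∈ connectedComponentIn Sᶜ (((b+1:ℝ),(0:ℝ))), a ≤ w.1 := by
  intro w hw
  by_contra hlt
  have h1 : w ∈ connectedComponentIn Sᶜ (((a-1:ℝ),(0:ℝ))) := comp_llb hSa w (not_le.mp hlt)
  exact hsep ((connectedComponentIn_eq h1).trans (connectedComponentIn_eq hw).symm)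

lemma comp_ub (hSb : ∀ w ∈ S, w.1 ≤ b)
    (hsep : connectedComponentIn Sᶜ (((a-1:ℝ),(0:ℝ))) ≠ connectedComponentIn Sᶜ (((b+1:ℝ),(0:ℝ)))) :
    ∀ w ∈ connectedComponentIn Sᶜ (((a-1:ℝ),(0:ℝ))), w.1 ≤ b := by
  intro w hw
  by_contra hlt
  have h1 : w ∈ connectedComponentIn Sᶜ (((b+1:ℝ),(0:ℝ))) := comp_rub hSb w (not_le.mp hlt)
  exact hsep (((connectedComponentIn_eq hw).trans (connectedComponentIn_eq h1).symm).symm).symm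

end compbounds

lemma iterate_lb (g : (ℝ×ℝ) ≃ₜ (ℝ×ℝ)) (hg1 : ∀ z : ℝ×ℝ, g (z + (1,0)) = g z + (1,0))
    {Rc : Set (ℝ×ℝ)} (hinv : ⇑g '' Rc ⊆ Rc) {a b : ℝ}
    (hRlb : ∀ w ∈ Rc, a ≤ w.1) (hRub : ∀ p : ℝ×ℝ, b < p.1 → p ∈ Rc) :
    ∀ (m : ℕ) (z : ℝ×ℝ), a - b - 2 + z.1 ≤ ((⇑g)^[m] z).1 := by
  have hshift := shift_comm (g := ⇑g) hg1
  intro m z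
  set c : ℤ := ⌈z.1 - b⌉ - 2 with hc
  have hc1 : (c:ℝ) < z.1 - b := by
    rw [hc]; push_cast; linarith [Int.ceil_lt_add_one (z.1 - b)]
  have hc2 : z.1 - b - 2 ≤ (c:ℝ) := by
    rw [hc]; push_cast; linarith [Int.le_ceil (z.1 - b)]
  have hu : z - ((c:ℝ),0) ∈ Rc := by
    apply hRub
    simp only [Prod.fst_sub]
    linarith
  have hiter : ∀ k : ℕ, (⇑g)^[k] z ∈ (fun w => w + ((c:ℝ),0)) '' Rc := by
    intro k
    induction k with
    | zero =>
        refine ⟨z - ((c:ℝ),0), hu, ?_⟩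
        simp only [Function.iterate_zero, id_eq]
        abel
    | succ k ih =>
        obtain ⟨w, hw, he⟩ := ih
        refine ⟨g w, hinv ⟨w, hw, rfl⟩, ?_⟩
        simp only at he ⊢
        rw [Function.iterate_succ_apply', ← he]
        exact (hshift c w).symm
  obtain ⟨w, hw, he⟩ := hiter m
  simp only at he
  have h1 : ((⇑g)^[m] z).1 = w.1 + (c:ℝ) := by
    rw [← he]; simp only [Prod.fst_add]
  rw [h1]
  linarith [hRlb w hw]

lemma iterate_ub (g : (ℝ×ℝ) ≃ₜ (ℝ×ℝ)) (hg1 : ∀ z : ℝ×ℝ, g (z + (1,0)) = g z + (1,0))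
    {Lc : Set (ℝ×ℝ)} (hinv : ⇑g '' Lc ⊆ Lc) {a b : ℝ}
    (hLub : ∀ w ∈ Lc, w.1 ≤ b) (hLlb : ∀ p : ℝ×ℝ, p.1 < a → p ∈ Lc) :
    ∀ (m : ℕ) (z : ℝ×ℝ), ((⇑g)^[m] z).1 ≤ b - a + 2 + z.1 := by
  have hshift := shift_comm (g := ⇑g) hg1
  intro m z
  set c : ℤ := ⌊z.1 - a⌋ + 2 with hc
  have hc1 : z.1 - a < (c:ℝ) := by
    rw [hc]; push_cast; linarith [Int.lt_floor_add_one (z.1 - a)]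
  have hc2 : (c:ℝ) ≤ z.1 - a + 2 := by
    rw [hc]; push_cast; linarith [Int.floor_le (z.1 - a), Int.lt_floor_add_one (z.1 - a)]
  have hu : z - ((c:ℝ),0) ∈ Lc := by
    apply hLlb
    simp only [Prod.fst_sub]
    linarith
  have hiter : ∀ k : ℕ, (⇑g)^[k] z ∈ (fun w => w + ((c:ℝ),0)) '' Lc := by
    intro k
    induction k with
    | zero =>
        refine ⟨z - ((c:ℝ),0), hu, ?_⟩
        simp only [Function.iterate_zero, id_eq]
        abel
    | succ k ih =>
        obtain ⟨w, hw, he⟩ := ih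
        refine ⟨g w, hinv ⟨w, hw, rfl⟩, ?_⟩
        simp only at he ⊢
        rw [Function.iterate_succ_apply', ← he]
        exact (hshift c w).symm
  obtain ⟨w, hw, he⟩ := hiter m
  simp only at he
  have h1 : ((⇑g)^[m] z).1 = w.1 + (c:ℝ) := by
    rw [← he]; simp only [Prod.fst_add]
  rw [h1]
  linarith [hLub w hw]

lemma rot_lb {f : ℝ×ℝ → ℝ×ℝ} {C w : ℝ}
    (h : ∀ (m : ℕ) (z : ℝ×ℝ), -C - (m:ℝ) * w ≤ (f^[m] z).1 - z.1) :
    ∀ v ∈ rotSet f, -w ≤ v.1 := by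
  rintro v ⟨n, x, hn, hv⟩
  have hv1 : Tendsto (fun i => (((n i:ℝ))⁻¹ • (f^[n i] (x i) - x i)).1) atTop (𝓝 v.1) :=
    (continuous_fst.tendsto v).comp hv
  have hnn : Tendsto (fun i => ((n i:ℝ))) atTop atTop :=
    tendsto_natCast_atTop_atTop.comp hn
  have hinv : Tendsto (fun i => ((n i:ℝ))⁻¹) atTop (𝓝 0) := hnn.inv_tendsto_atTop
  have hL : Tendsto (fun i => -C * ((n i:ℝ))⁻¹ + -w) atTop (𝓝 (-w)) := by
    have h2 := (hinv.const_mul (-C)).add_const (-w)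
    simpa using h2
  refine le_of_tendsto_of_tendsto hL hv1 ?_
  filter_upwards [hn.eventually_ge_atTop 1] with i hi
  have hpos : (0:ℝ) < (n i:ℝ) := by exact_mod_cast hi
  have hinv0 : (0:ℝ) ≤ ((n i:ℝ))⁻¹ := by positivity
  have hb := h (n i) (x i)
  have hfst : (((n i:ℝ))⁻¹ • (f^[n i] (x i) - x i)).1
      = ((n i:ℝ))⁻¹ * ((f^[n i] (x i)).1 - (x i).1) := by
    simp [Prod.smul_fst, Prod.fst_sub]
  have h2 : ((n i:ℝ))⁻¹ * (-C - (n i:ℝ) * w) ≤ ((n i:ℝ))⁻¹ * ((f^[n i] (x i)).1 - (x i).1) :=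
    mul_le_mul_of_nonneg_left hb hinv0
  have h3 : ((n i:ℝ))⁻¹ * (-C - (n i:ℝ) * w) = -C * ((n i:ℝ))⁻¹ + -w := by
    field_simp
    ring
  rw [hfst]
  linarith [h3 ▸ h2]

lemma rot_ub {f : ℝ×ℝ → ℝ×ℝ} {C w : ℝ}
    (h : ∀ (m : ℕ) (z : ℝ×ℝ), (f^[m] z).1 - z.1 ≤ C - (m:ℝ) * w) :
    ∀ v ∈ rotSet f, v.1 ≤ -w := by
  rintro v ⟨n, x, hn, hv⟩
  have hv1 : Tendsto (fun i => (((n i:ℝ))⁻¹ • (f^[n i] (x i) - x i)).1) atTop (𝓝 v.1) :=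
    (continuous_fst.tendsto v).comp hv
  have hnn : Tendsto (fun i => ((n i:ℝ))) atTop atTop :=
    tendsto_natCast_atTop_atTop.comp hn
  have hinv : Tendsto (fun i => ((n i:ℝ))⁻¹) atTop (𝓝 0) := hnn.inv_tendsto_atTop
  have hL : Tendsto (fun i => C * ((n i:ℝ))⁻¹ + -w) atTop (𝓝 (-w)) := by
    have h2 := (hinv.const_mul C).add_const (-w)
    simpa using h2
  refine le_of_tendsto_of_tendsto hv1 hL ?_
  filter_upwards [hn.eventually_ge_atTop 1] with i hi
  have hpos : (0:ℝ) < (n i:ℝ) := by exact_mod_cast hi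
  have hinv0 : (0:ℝ) ≤ ((n i:ℝ))⁻¹ := by positivity
  have hb := h (n i) (x i)
  have hfst : (((n i:ℝ))⁻¹ • (f^[n i] (x i) - x i)).1
      = ((n i:ℝ))⁻¹ * ((f^[n i] (x i)).1 - (x i).1) := by
    simp [Prod.smul_fst, Prod.fst_sub]
  have h2 : ((n i:ℝ))⁻¹ * ((f^[n i] (x i)).1 - (x i).1) ≤ ((n i:ℝ))⁻¹ * (C - (n i:ℝ) * w) :=
    mul_le_mul_of_nonneg_left hb hinv0
  have h3 : ((n i:ℝ))⁻¹ * (C - (n i:ℝ) * w) = C * ((n i:ℝ))⁻¹ + -w := by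
    field_simp
    ring
  rw [hfst]
  linarith [h3 ▸ h2]



end

end RotFreeAux

open RotFreeAux
open Set Real

/-- If `F` has a free `(0,1)`-curve, lifted to a `(0,1)`-line `ℓ` disjoint from all
the lines `T₁^n f(ℓ)`, `n ∈ ℤ`, then for any lift `f` of `F` there is `k ∈ ℤ` with
`pr₁(rot(f)) ⊆ [k, k+1]`. -/
theorem rot_first_coord_in_unit_interval_of_free_curve (f : (ℝ × ℝ) ≃ₜ (ℝ × ℝ))
    (hf1 : ∀ z, f (T1 z) = T1 (f z)) (hf2 : ∀ z, f (T2 z) = T2 (f z))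
    (hfree : ∃ ℓ, IsPQLine 0 1 ℓ ∧ ∀ n : ℤ,
      Disjoint (Set.range fun t => f (ℓ t) + ((n : ℝ), 0)) (Set.range ℓ)) :
    ∃ k : ℤ, ∀ v ∈ rotSet ⇑f, (k : ℝ) ≤ v.1 ∧ v.1 ≤ (k : ℝ) + 1 := by
  obtain ⟨ℓ, ⟨⟨hinj, hproper⟩, τ, hτ, hper0, hsimp⟩, hfree'⟩ := hfree
  have hcont : Continuous ℓ := hproper.continuous
  have hSclosed : IsClosed (range ℓ) := hproper.isClosedMap.isClosed_range
  have hper : ∀ t, ℓ (t + τ) = ℓ t + (0, 1) := by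
    intro t
    have h := hper0 t
    push_cast at h
    exact h
  -- bounds for the first coordinate
  have hper1 : Function.Periodic (fun t => (ℓ t).1) τ := by
    intro t
    simp only []
    rw [hper t]
    simp [Prod.fst_add]
  have himg : (fun t => (ℓ t).1) '' Icc 0 (0 + τ) = range (fun t => (ℓ t).1) :=
    hper1.image_Icc hτ 0
  have hIccne : (Icc (0:ℝ) (0 + τ)).Nonempty := Set.nonempty_Icc.mpr (by linarith)
  obtain ⟨ta, htaQ, hmin'⟩ := isCompact_Icc.exists_isMinOn hIccne (hcont.fst.continuousOn)
  obtain ⟨tb, htbQ, hmax'⟩ := isCompact_Icc.exists_isMaxOn hIccne (hcont.fst.continuousOn)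
  have hmin := isMinOn_iff.mp hmin'
  have hmax := isMaxOn_iff.mp hmax'
  set a := (ℓ ta).1 with ha'
  set b := (ℓ tb).1 with hb'
  have ha : ∀ t, a ≤ (ℓ t).1 := by
    intro t
    have hmem : (ℓ t).1 ∈ range (fun t => (ℓ t).1) := ⟨t, rfl⟩
    rw [← himg] at hmem
    obtain ⟨s, hs, he⟩ := hmem
    rw [← he]
    exact hmin s hs
  have hb : ∀ t, (ℓ t).1 ≤ b := by
    intro t
    have hmem : (ℓ t).1 ∈ range (fun t => (ℓ t).1) := ⟨t, rfl⟩
    rw [← himg] at hmem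
    obtain ⟨s, hs, he⟩ := hmem
    rw [← he]
    exact hmax s hs
  have hSa : ∀ w ∈ range ℓ, a ≤ w.1 := by rintro w ⟨t, rfl⟩; exact ha t
  have hSb : ∀ w ∈ range ℓ, w.1 ≤ b := by rintro w ⟨t, rfl⟩; exact hb t
  have hSc : IsPreconnected (range ℓ) := isPreconnected_range hcont
  have hsep := left_ne_right hcont hSclosed hτ hper ha hb
  have hT1 : ∀ z : ℝ×ℝ, T1 z = z + (1,0) := by
    intro z
    unfold T1
    refine Prod.ext ?_ ?_ <;> simp
  have hfp : ∀ z : ℝ×ℝ, f (z + (1,0)) = f z + (1,0) := by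
    intro z
    rw [← hT1, hf1 z, hT1]
  have hfshift := shift_comm (g := ⇑f) hfp
  -- dichotomy for every integer
  have hdich : ∀ nn : ℤ, (∀ v ∈ rotSet ⇑f, -(nn:ℝ) ≤ v.1) ∨ (∀ v ∈ rotSet ⇑f, v.1 ≤ -(nn:ℝ)) := by
    intro nn
    set g : (ℝ×ℝ) ≃ₜ (ℝ×ℝ) := f.trans (Homeomorph.addRight (((nn:ℝ),(0:ℝ)) : ℝ×ℝ)) with hgdef
    have hgapp : ∀ z, g z = f z + ((nn:ℝ), 0) := fun z => rfl
    have hg1 : ∀ z : ℝ×ℝ, g (z + (1,0)) = g z + (1,0) := by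
      intro z
      rw [hgapp, hgapp, hfp]
      abel
    have hgd : ∀ w ∈ range ℓ, g w ∉ range ℓ := by
      rintro w ⟨t, rfl⟩ hmem
      exact Set.disjoint_left.mp (hfree' nn) ⟨t, rfl⟩ hmem
    have hgiter : ∀ (m : ℕ) (z : ℝ×ℝ), (⇑g)^[m] z = (⇑f)^[m] z + ((m:ℝ) * (nn:ℝ), 0) := by
      intro m
      induction m with
      | zero =>
          intro z
          simp only [Function.iterate_zero, id_eq]
          refine Prod.ext ?_ ?_ <;> simp
      | succ m ih =>
          intro z
          rw [Function.iterate_succ_apply', Function.iterate_succ_apply', ih z, hgapp]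
          have hcast : ((m:ℝ) * (nn:ℝ), (0:ℝ)) = ((((m * nn : ℤ)):ℝ), (0:ℝ)) := by
            push_cast; ring_nf
          rw [hcast, hfshift (m * nn : ℤ) ((⇑f)^[m] z)]
          refine Prod.ext ?_ ?_ <;> simp [Prod.fst_add, Prod.snd_add] <;> push_cast <;> ring
    rcases dichotomy hSclosed hSc (⟨0, rfl⟩ : ℓ 0 ∈ range ℓ) hSa hSb hsep g hg1 hgd
      with hcase | hcase
    · left
      have hlb := iterate_lb g hg1 hcase (comp_lb hSa hsep) (comp_rub hSb)
      refine rot_lb (C := b - a + 2) (w := (nn:ℝ)) ?_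
      intro m z
      have h1 := hlb m z
      have h2 : ((⇑g)^[m] z).1 = ((⇑f)^[m] z).1 + (m:ℝ) * (nn:ℝ) := by
        rw [hgiter m z]
        simp [Prod.fst_add]
      rw [h2] at h1
      linarith
    · right
      have hub := iterate_ub g hg1 hcase (comp_ub hSb hsep) (comp_llb hSa)
      refine rot_ub (C := b - a + 2) (w := (nn:ℝ)) ?_
      intro m z
      have h1 := hub m z
      have h2 : ((⇑g)^[m] z).1 = ((⇑f)^[m] z).1 + (m:ℝ) * (nn:ℝ) := by
        rw [hgiter m z]
        simp [Prod.fst_add]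
      rw [h2] at h1
      linarith
  -- assemble
  rcases Set.eq_empty_or_nonempty (rotSet ⇑f) with hre | ⟨v₀, hv₀⟩
  · exact ⟨0, fun v hv => by rw [hre] at hv; exact absurd hv (Set.notMem_empty v)⟩
  · set P : ℤ → Prop := fun k => ∀ v ∈ rotSet ⇑f, -(k:ℝ) ≤ v.1 with hP
    have hPmono : ∀ k k' : ℤ, k ≤ k' → P k → P k' := by
      intro k k' hkk hk v hv
      have := hk v hv
      have hcast : (k:ℝ) ≤ (k':ℝ) := by exact_mod_cast hkk
      linarith
    have hPex : ∃ k, P k := by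
      by_contra h
      push_neg at h
      obtain ⟨k, hk⟩ := exists_int_gt (-v₀.1)
      rcases hdich k with hc | hc
      · exact h k hc
      · have := hc v₀ hv₀
        linarith
    have hPnex : ∃ k, ¬ P k := by
      obtain ⟨k, hk⟩ := exists_int_lt (-v₀.1 - 1)
      refine ⟨k, fun hPk => ?_⟩
      have := hPk v₀ hv₀
      linarith
    obtain ⟨k₀, hk₀⟩ := hPnex
    have hbdd : ∀ z : ℤ, P z → k₀ + 1 ≤ z := by
      intro zz hz
      by_contra hlt
      push_neg at hlt
      exact hk₀ (hPmono zz k₀ (by omega) hz)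
    obtain ⟨n₀, hPn₀, hleast⟩ := Int.exists_least_of_bdd ⟨k₀ + 1, hbdd⟩ hPex
    have hnotP : ¬ P (n₀ - 1) := by
      intro h
      have := hleast _ h
      omega
    have hQ : ∀ v ∈ rotSet ⇑f, v.1 ≤ -((n₀ - 1 : ℤ):ℝ) := by
      rcases hdich (n₀ - 1) with hc | hc
      · exact absurd hc hnotP
      · exact hc
    refine ⟨-n₀, fun v hv => ⟨?_, ?_⟩⟩
    · have := hPn₀ v hv
      push_cast
      linarith
    · have := hQ v hv
      push_cast at this ⊢
      linarith
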